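/- Let μ₁, μ₂, μ₃ be complex numbers with Re(μ₁) > Re(μ₂) > Re(μ₃). Then the function from ℝ³ to ℂ given by (u₁,u₂,u₃) ↦ (1 + u₂² + u₃²)^{(-1+μ₃-μ₂)/2} · (1 + u₁² + (u₃ - u₁u₂)²)^{(-1+μ₂-μ₁)/2} is Lebesgue integrable on ℝ³. -/

import Mathlib

open MeasureTheory Real

noncomputable def K (p : ℝ) : ℝ := ∫ z : ℝ, (1 + z ^ 2) ^ p

lemma K_nonneg (p : ℝ) : 0 ≤ K p :=
  integral_nonneg fun z => Real.rpow_nonneg (by positivity) p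

lemma base_integrable {p : ℝ} (hp : p < -(1/2)) :
    Integrable (fun z : ℝ => (1 + z ^ 2) ^ p) := by
  have hr : (Module.finrank ℝ ℝ : ℝ) < -(2*p) := by
    simp [Module.finrank_self]; linarith
  refine ((integrable_one_add_norm hr).const_mul ((2:ℝ) ^ (-p))).mono'
    ?_ ?_
  · exact ((continuous_const.add (continuous_pow 2) : Continuous fun x : ℝ => 1 + x ^ 2).rpow_const
      (fun x => Or.inl (show (1:ℝ) + x ^ 2 ≠ 0 by positivity))).aestronglyMeasurable
  · refine Filter.Eventually.of_forall fun z => ?_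
    rw [Real.norm_of_nonneg (by positivity)]
    have h1 : ((1 + ‖z‖) ^ 2) / 2 ≤ 1 + z ^ 2 := by
      have := sq_nonneg (1 - ‖z‖)
      have : ‖z‖ ^ 2 = z ^ 2 := by simp [sq_abs, Real.norm_eq_abs]
      nlinarith [sq_nonneg (1 - ‖z‖)]
    have h2 : (1 + z ^ 2) ^ p ≤ (((1 + ‖z‖) ^ 2) / 2) ^ p :=
      Real.rpow_le_rpow_of_nonpos (by positivity) h1 (by linarith)
    calc (1 + z ^ 2) ^ p ≤ (((1 + ‖z‖) ^ 2) / 2) ^ p := h2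
      _ = (2:ℝ) ^ (-p) * (1 + ‖z‖) ^ (-(-(2*p))) := by
        rw [Real.div_rpow (by positivity) (by norm_num),
          Real.rpow_neg (by norm_num), ← Real.rpow_natCast (1 + ‖z‖) 2,
          ← Real.rpow_mul (by positivity), neg_neg]
        push_cast
        ring

lemma scaled_integrable {p : ℝ} (hp : p < -(1/2)) {m : ℝ} (hm : 0 < m) (c : ℝ) :
    Integrable (fun z : ℝ => (1 + m * (z - c) ^ 2) ^ p) := by
  have key : ∀ z : ℝ, 1 + m * (z - c) ^ 2
      = 1 + (Real.sqrt m * z - Real.sqrt m * c) ^ 2 := by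
    intro z; conv_lhs => rw [← Real.sq_sqrt hm.le]
    ring
  simp_rw [key]
  have h1 : Integrable (fun z : ℝ => (1 + (z - Real.sqrt m * c) ^ 2) ^ p) :=
    (base_integrable hp).comp_sub_right _
  exact h1.comp_mul_left' (ne_of_gt (Real.sqrt_pos.2 hm))

lemma scaled_integral (p : ℝ) {m : ℝ} (hm : 0 < m) (c : ℝ) :
    ∫ z : ℝ, (1 + m * (z - c) ^ 2) ^ p = (Real.sqrt m)⁻¹ * K p := by
  have key : ∀ z : ℝ, 1 + m * (z - c) ^ 2
      = 1 + (Real.sqrt m * z - Real.sqrt m * c) ^ 2 := by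
    intro z; conv_lhs => rw [← Real.sq_sqrt hm.le]
    ring
  simp_rw [key]
  have h := MeasureTheory.Measure.integral_comp_mul_left
    (fun z : ℝ => (1 + (z - Real.sqrt m * c) ^ 2) ^ p) (Real.sqrt m)
  rw [h, integral_sub_right_eq_self (fun z : ℝ => (1 + z ^ 2) ^ p),
    smul_eq_mul, abs_of_nonneg (by positivity)]
  rfl

lemma scaled_integrable0 {p : ℝ} (hp : p < -(1/2)) {m : ℝ} (hm : 0 < m) :
    Integrable (fun y : ℝ => (1 + m * y ^ 2) ^ p) := by
  simpa using scaled_integrable hp hm 0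

lemma scaled_integral0 (p : ℝ) {m : ℝ} (hm : 0 < m) :
    ∫ y : ℝ, (1 + m * y ^ 2) ^ p = (Real.sqrt m)⁻¹ * K p := by
  simpa using scaled_integral p hm 0

lemma shifted_integrable {p : ℝ} (hp : p < -(1/2)) {k : ℝ} (hk : 0 < k) (c : ℝ) :
    Integrable (fun z : ℝ => (k + (z - c) ^ 2) ^ p) := by
  have key : ∀ z : ℝ, (k + (z - c) ^ 2) ^ p = k ^ p * (1 + k⁻¹ * (z - c) ^ 2) ^ p := by
    intro z
    rw [show k + (z - c) ^ 2 = k * (1 + k⁻¹ * (z - c) ^ 2) by field_simp,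
      Real.mul_rpow hk.le (by positivity)]
  simp_rw [key]
  exact (scaled_integrable hp (inv_pos.2 hk) c).const_mul _

lemma shifted_integral (p : ℝ) {k : ℝ} (hk : 0 < k) (c : ℝ) :
    ∫ z : ℝ, (k + (z - c) ^ 2) ^ p = k ^ (p + 1/2) * K p := by
  have key : ∀ z : ℝ, (k + (z - c) ^ 2) ^ p = k ^ p * (1 + k⁻¹ * (z - c) ^ 2) ^ p := by
    intro z
    rw [show k + (z - c) ^ 2 = k * (1 + k⁻¹ * (z - c) ^ 2) by field_simp,
      Real.mul_rpow hk.le (by positivity)]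
  simp_rw [key]
  rw [MeasureTheory.integral_const_mul, scaled_integral p (inv_pos.2 hk) c,
    Real.sqrt_inv, inv_inv, ← mul_assoc, Real.sqrt_eq_rpow,
    ← Real.rpow_add hk]

lemma contRpow {α : Type*} [TopologicalSpace α] {f : α → ℝ} (hf : Continuous f)
    (hpos : ∀ x, 0 < f x) (p : ℝ) : Continuous fun x => f x ^ p :=
  hf.rpow_const fun x => Or.inl (hpos x).ne'

lemma H2_int {a b : ℝ} (ha : a < -(1/2)) (hb : b < -(1/2)) :
    Integrable (fun u : ℝ × ℝ × ℝ =>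
      (1 + (1 + u.1 ^ 2 / 4) * u.2.1 ^ 2) ^ a
        * (1 + u.1 ^ 2 + (u.2.2 - u.1 * u.2.1) ^ 2) ^ b) := by
  have cont : Continuous (fun u : ℝ × ℝ × ℝ =>
      (1 + (1 + u.1 ^ 2 / 4) * u.2.1 ^ 2) ^ a
        * (1 + u.1 ^ 2 + (u.2.2 - u.1 * u.2.1) ^ 2) ^ b) :=
    (contRpow (by fun_prop) (fun u => by positivity) a).mul
      (contRpow (by fun_prop) (fun u => by positivity) b)
  -- inner integrability over ℝ² for every fixed x
  have inner : ∀ x : ℝ, Integrable (fun v : ℝ × ℝ =>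
      (1 + (1 + x ^ 2 / 4) * v.1 ^ 2) ^ a
        * (1 + x ^ 2 + (v.2 - x * v.1) ^ 2) ^ b) := by
    intro x
    have contx : Continuous (fun v : ℝ × ℝ =>
        (1 + (1 + x ^ 2 / 4) * v.1 ^ 2) ^ a
          * (1 + x ^ 2 + (v.2 - x * v.1) ^ 2) ^ b) :=
      (contRpow (by fun_prop) (fun v => by positivity) a).mul
        (contRpow (by fun_prop) (fun v => by positivity) b)
    rw [show (volume : Measure (ℝ × ℝ)) = (volume : Measure ℝ).prod volume from rfl]
    refine (integrable_prod_iff ?_).2 ⟨?_, ?_⟩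
    · exact contx.aestronglyMeasurable
    · refine Filter.Eventually.of_forall fun y => ?_
      exact (shifted_integrable hb (by positivity : (0:ℝ) < 1 + x ^ 2) (x * y)).const_mul
        ((1 + (1 + x ^ 2 / 4) * y ^ 2) ^ a)
    · have eq1 : ∀ y : ℝ,
          (∫ z : ℝ, ‖(1 + (1 + x ^ 2 / 4) * y ^ 2) ^ a
            * (1 + x ^ 2 + (z - x * y) ^ 2) ^ b‖)
          = (1 + (1 + x ^ 2 / 4) * y ^ 2) ^ a * ((1 + x ^ 2) ^ (b + 1/2) * K b) := by
        intro y
        have hn : ∀ z : ℝ, ‖(1 + (1 + x ^ 2 / 4) * y ^ 2) ^ a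
            * (1 + x ^ 2 + (z - x * y) ^ 2) ^ b‖
            = (1 + (1 + x ^ 2 / 4) * y ^ 2) ^ a
              * (1 + x ^ 2 + (z - x * y) ^ 2) ^ b := fun z =>
          Real.norm_of_nonneg (by positivity)
        simp_rw [hn]
        rw [MeasureTheory.integral_const_mul,
          shifted_integral b (by positivity : (0:ℝ) < 1 + x ^ 2) (x * y)]
      have : Integrable (fun y : ℝ =>
          (1 + (1 + x ^ 2 / 4) * y ^ 2) ^ a * ((1 + x ^ 2) ^ (b + 1/2) * K b)) :=
        (scaled_integrable0 ha (by positivity : (0:ℝ) < 1 + x ^ 2 / 4)).mul_const _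
      exact this.congr (Filter.Eventually.of_forall fun y => ((eq1 y).symm : _))
  -- value of the inner integral of norms
  have eq2 : ∀ x : ℝ, (∫ v : ℝ × ℝ, ‖(1 + (1 + x ^ 2 / 4) * v.1 ^ 2) ^ a
        * (1 + x ^ 2 + (v.2 - x * v.1) ^ 2) ^ b‖)
      = ((Real.sqrt (1 + x ^ 2 / 4))⁻¹ * K a) * ((1 + x ^ 2) ^ (b + 1/2) * K b) := by
    intro x
    rw [show (volume : Measure (ℝ × ℝ)) = (volume : Measure ℝ).prod volume from rfl]
    rw [MeasureTheory.integral_prod _ ((by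
      rw [show (volume : Measure (ℝ × ℝ)) = (volume : Measure ℝ).prod volume from rfl] at inner
      exact (inner x).norm) : Integrable _ ((volume : Measure ℝ).prod volume))]
    have hn : ∀ (y z : ℝ), ‖(1 + (1 + x ^ 2 / 4) * y ^ 2) ^ a
        * (1 + x ^ 2 + (z - x * y) ^ 2) ^ b‖
        = (1 + (1 + x ^ 2 / 4) * y ^ 2) ^ a
          * (1 + x ^ 2 + (z - x * y) ^ 2) ^ b := fun y z =>
      Real.norm_of_nonneg (by positivity)
    simp_rw [hn, MeasureTheory.integral_const_mul]
    have eqz : ∀ y : ℝ, (∫ z : ℝ, (1 + x ^ 2 + (z - x * y) ^ 2) ^ b)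
        = (1 + x ^ 2) ^ (b + 1/2) * K b := fun y =>
      shifted_integral b (by positivity) (x * y)
    simp_rw [eqz, MeasureTheory.integral_mul_const,
      scaled_integral0 a (by positivity : (0:ℝ) < 1 + x ^ 2 / 4)]
  -- assemble
  rw [show (volume : Measure (ℝ × ℝ × ℝ)) = (volume : Measure ℝ).prod volume from rfl]
  refine (integrable_prod_iff ?_).2 ⟨?_, ?_⟩
  · exact cont.aestronglyMeasurable
  · exact Filter.Eventually.of_forall fun x => inner x
  · have hform : Integrable (fun x : ℝ =>
        ((Real.sqrt (1 + x ^ 2 / 4))⁻¹ * K a) * ((1 + x ^ 2) ^ (b + 1/2) * K b)) := by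
      refine Integrable.mono' (g := fun x : ℝ => (2 * K a * K b) * (1 + x ^ 2) ^ b)
        (((base_integrable hb).const_mul _)) ?_
        (Filter.Eventually.of_forall fun x => ?_)
      · refine Continuous.aestronglyMeasurable ?_
        have h1 : Continuous fun x : ℝ => (Real.sqrt (1 + x ^ 2 / 4))⁻¹ :=
          ((continuous_const.add ((continuous_pow 2).div_const 4)).sqrt).inv₀
            fun x => (Real.sqrt_pos.2 (show (0:ℝ) < 1 + x ^ 2 / 4 by positivity)).ne'
        exact ((h1.mul continuous_const).mul
          ((contRpow (by fun_prop) (fun x => by positivity) (b + 1/2)).mul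
            continuous_const))
      · have hKa := K_nonneg a
        have hKb := K_nonneg b
        have hs : Real.sqrt ((1 + x ^ 2) / 4) ≤ Real.sqrt (1 + x ^ 2 / 4) :=
          Real.sqrt_le_sqrt (by nlinarith [sq_nonneg x])
        have hs2 : Real.sqrt ((1 + x ^ 2) / 4) = Real.sqrt (1 + x ^ 2) / 2 := by
          rw [show ((1 + x ^ 2) / 4 : ℝ) = (1 + x ^ 2) * (1/2) ^ 2 by ring,
            Real.sqrt_mul (by positivity), Real.sqrt_sq (by norm_num)]
          ring
        have hrw : (Real.sqrt (1 + x ^ 2))⁻¹ = (1 + x ^ 2) ^ (-(1/2) : ℝ) := by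
          rw [Real.rpow_neg (by positivity), Real.sqrt_eq_rpow]
        have hinv : (Real.sqrt (1 + x ^ 2 / 4))⁻¹ ≤ 2 * (1 + x ^ 2) ^ (-(1/2) : ℝ) := by
          have h1 : (Real.sqrt (1 + x ^ 2 / 4))⁻¹ ≤ (Real.sqrt ((1 + x ^ 2) / 4))⁻¹ :=
            inv_anti₀ (Real.sqrt_pos.2 (by positivity)) hs
          calc (Real.sqrt (1 + x ^ 2 / 4))⁻¹ ≤ (Real.sqrt ((1 + x ^ 2) / 4))⁻¹ := h1
            _ = 2 * (1 + x ^ 2) ^ (-(1/2) : ℝ) := by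
              rw [hs2, ← hrw]
              field_simp
        rw [Real.norm_of_nonneg (mul_nonneg
          (mul_nonneg (inv_nonneg.2 (Real.sqrt_nonneg _)) hKa)
          (mul_nonneg (Real.rpow_nonneg (by positivity) _) hKb))]
        calc ((Real.sqrt (1 + x ^ 2 / 4))⁻¹ * K a) * ((1 + x ^ 2) ^ (b + 1/2) * K b)
            ≤ ((2 * (1 + x ^ 2) ^ (-(1/2) : ℝ)) * K a)
              * ((1 + x ^ 2) ^ (b + 1/2) * K b) :=
              mul_le_mul_of_nonneg_right (mul_le_mul_of_nonneg_right hinv hKa)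
                (mul_nonneg (Real.rpow_nonneg (by positivity) _) hKb)
          _ = (2 * K a * K b) * (1 + x ^ 2) ^ b := by
              rw [show ((1 + x ^ 2 : ℝ)) ^ b
                  = (1 + x ^ 2) ^ (-(1/2) : ℝ) * (1 + x ^ 2) ^ (b + 1/2) by
                rw [← Real.rpow_add (by positivity)]; ring_nf]
              ring
    exact hform.congr (Filter.Eventually.of_forall fun x => ((eq2 x).symm : _))

lemma shifted_integrable0 {p : ℝ} (hp : p < -(1/2)) {k : ℝ} (hk : 0 < k) :
    Integrable (fun z : ℝ => (k + z ^ 2) ^ p) := by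
  simpa using shifted_integrable hp hk 0

lemma shifted_integral0 (p : ℝ) {k : ℝ} (hk : 0 < k) :
    ∫ z : ℝ, (k + z ^ 2) ^ p = k ^ (p + 1/2) * K p := by
  simpa using shifted_integral p hk 0

lemma sqrt_inv_bound (x : ℝ) :
    (Real.sqrt (1 + x ^ 2 / 4))⁻¹ ≤ 2 * (1 + x ^ 2) ^ (-(1/2) : ℝ) := by
  have hs : Real.sqrt ((1 + x ^ 2) / 4) ≤ Real.sqrt (1 + x ^ 2 / 4) :=
    Real.sqrt_le_sqrt (by nlinarith [sq_nonneg x])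
  have hs2 : Real.sqrt ((1 + x ^ 2) / 4) = Real.sqrt (1 + x ^ 2) / 2 := by
    rw [show ((1 + x ^ 2) / 4 : ℝ) = (1 + x ^ 2) * (1/2) ^ 2 by ring,
      Real.sqrt_mul (by positivity), Real.sqrt_sq (by norm_num)]
    ring
  have hrw : (Real.sqrt (1 + x ^ 2))⁻¹ = (1 + x ^ 2) ^ (-(1/2) : ℝ) := by
    rw [Real.rpow_neg (by positivity), Real.sqrt_eq_rpow]
  calc (Real.sqrt (1 + x ^ 2 / 4))⁻¹ ≤ (Real.sqrt ((1 + x ^ 2) / 4))⁻¹ :=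
        inv_anti₀ (Real.sqrt_pos.2 (by positivity)) hs
    _ = 2 * (1 + x ^ 2) ^ (-(1/2) : ℝ) := by
        rw [hs2, ← hrw]
        field_simp

lemma H1_int {a b : ℝ} (ha : a < -(1/2)) (hb : b < -(1/2)) :
    Integrable (fun u : ℝ × ℝ × ℝ =>
      (1 + u.2.1 ^ 2 + u.2.2 ^ 2) ^ a * (1 + (1 + u.2.1 ^ 2 / 4) * u.1 ^ 2) ^ b) := by
  have cont : Continuous (fun u : ℝ × ℝ × ℝ =>
      (1 + u.2.1 ^ 2 + u.2.2 ^ 2) ^ a * (1 + (1 + u.2.1 ^ 2 / 4) * u.1 ^ 2) ^ b) :=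
    (contRpow (by fun_prop) (fun u => by positivity) a).mul
      (contRpow (by fun_prop) (fun u => by positivity) b)
  rw [show (volume : Measure (ℝ × ℝ × ℝ)) = (volume : Measure ℝ).prod volume from rfl]
  refine (integrable_prod_iff' ?_).2 ⟨?_, ?_⟩
  · exact cont.aestronglyMeasurable
  · refine Filter.Eventually.of_forall fun v => ?_
    exact (scaled_integrable0 hb (by positivity : (0:ℝ) < 1 + v.1 ^ 2 / 4)).const_mul
      ((1 + v.1 ^ 2 + v.2 ^ 2) ^ a)
  · have eq1 : ∀ v : ℝ × ℝ,
        (∫ x : ℝ, ‖(1 + v.1 ^ 2 + v.2 ^ 2) ^ a * (1 + (1 + v.1 ^ 2 / 4) * x ^ 2) ^ b‖)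
        = (1 + v.1 ^ 2 + v.2 ^ 2) ^ a * ((Real.sqrt (1 + v.1 ^ 2 / 4))⁻¹ * K b) := by
      intro v
      have hn : ∀ x : ℝ, ‖(1 + v.1 ^ 2 + v.2 ^ 2) ^ a * (1 + (1 + v.1 ^ 2 / 4) * x ^ 2) ^ b‖
          = (1 + v.1 ^ 2 + v.2 ^ 2) ^ a * (1 + (1 + v.1 ^ 2 / 4) * x ^ 2) ^ b := fun x =>
        Real.norm_of_nonneg (by positivity)
      simp_rw [hn]
      rw [MeasureTheory.integral_const_mul,
        scaled_integral0 b (by positivity : (0:ℝ) < 1 + v.1 ^ 2 / 4)]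
    have hF : Integrable (fun v : ℝ × ℝ =>
        (1 + v.1 ^ 2 + v.2 ^ 2) ^ a * ((Real.sqrt (1 + v.1 ^ 2 / 4))⁻¹ * K b)) := by
      have hKb := K_nonneg b
      have contF : Continuous (fun v : ℝ × ℝ =>
          (1 + v.1 ^ 2 + v.2 ^ 2) ^ a * ((Real.sqrt (1 + v.1 ^ 2 / 4))⁻¹ * K b)) := by
        refine (contRpow (by fun_prop) (fun v => by positivity) a).mul ?_
        exact (((continuous_const.add
          ((continuous_pow 2).comp continuous_fst |>.div_const 4)).sqrt).inv₀
          (fun v => (Real.sqrt_pos.2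
            (show (0:ℝ) < 1 + v.1 ^ 2 / 4 by positivity)).ne')).mul continuous_const
      rw [show (volume : Measure (ℝ × ℝ)) = (volume : Measure ℝ).prod volume from rfl]
      refine (integrable_prod_iff contF.aestronglyMeasurable).2 ⟨?_, ?_⟩
      · refine Filter.Eventually.of_forall fun y => ?_
        exact (shifted_integrable0 ha (by positivity : (0:ℝ) < 1 + y ^ 2)).mul_const
          ((Real.sqrt (1 + y ^ 2 / 4))⁻¹ * K b)
      · have eqy : ∀ y : ℝ,
            (∫ z : ℝ, ‖(1 + y ^ 2 + z ^ 2) ^ a * ((Real.sqrt (1 + y ^ 2 / 4))⁻¹ * K b)‖)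
            = ((1 + y ^ 2) ^ (a + 1/2) * K a) * ((Real.sqrt (1 + y ^ 2 / 4))⁻¹ * K b) := by
          intro y
          have hn : ∀ z : ℝ, ‖(1 + y ^ 2 + z ^ 2) ^ a * ((Real.sqrt (1 + y ^ 2 / 4))⁻¹ * K b)‖
              = (1 + y ^ 2 + z ^ 2) ^ a * ((Real.sqrt (1 + y ^ 2 / 4))⁻¹ * K b) := fun z =>
            Real.norm_of_nonneg (mul_nonneg (Real.rpow_nonneg (by positivity) _)
              (mul_nonneg (inv_nonneg.2 (Real.sqrt_nonneg _)) hKb))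
          simp_rw [hn]
          rw [MeasureTheory.integral_mul_const,
            shifted_integral0 a (by positivity : (0:ℝ) < 1 + y ^ 2)]
      -- integrable marginal in y
        have hKa := K_nonneg a
        have hform : Integrable (fun y : ℝ =>
            ((1 + y ^ 2) ^ (a + 1/2) * K a) * ((Real.sqrt (1 + y ^ 2 / 4))⁻¹ * K b)) := by
          refine Integrable.mono' (g := fun y : ℝ => (2 * K a * K b) * (1 + y ^ 2) ^ a)
            ((base_integrable ha).const_mul _) ?_
            (Filter.Eventually.of_forall fun y => ?_)
          · refine Continuous.aestronglyMeasurable ?_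
            refine ((contRpow (by fun_prop) (fun y => by positivity) (a + 1/2)).mul
              continuous_const).mul ?_
            exact (((continuous_const.add
              ((continuous_pow 2).div_const 4)).sqrt).inv₀
              (fun y => (Real.sqrt_pos.2 (show (0:ℝ) < 1 + y ^ 2 / 4 by positivity)).ne')).mul continuous_const
          · rw [Real.norm_of_nonneg (mul_nonneg
              (mul_nonneg (Real.rpow_nonneg (by positivity) _) hKa)
              (mul_nonneg (inv_nonneg.2 (Real.sqrt_nonneg _)) hKb))]
            calc ((1 + y ^ 2) ^ (a + 1/2) * K a)
                  * ((Real.sqrt (1 + y ^ 2 / 4))⁻¹ * K b)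
                ≤ ((1 + y ^ 2) ^ (a + 1/2) * K a)
                  * ((2 * (1 + y ^ 2) ^ (-(1/2) : ℝ)) * K b) :=
                  mul_le_mul_of_nonneg_left
                    (mul_le_mul_of_nonneg_right (sqrt_inv_bound y) hKb)
                    (mul_nonneg (Real.rpow_nonneg (by positivity) _) hKa)
              _ = (2 * K a * K b) * (1 + y ^ 2) ^ a := by
                  rw [show ((1 + y ^ 2 : ℝ)) ^ a
                      = (1 + y ^ 2) ^ (a + 1/2) * (1 + y ^ 2) ^ (-(1/2) : ℝ) by
                    rw [← Real.rpow_add (by positivity)]; ring_nf]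
                  ring
        exact hform.congr (Filter.Eventually.of_forall fun y => ((eqy y).symm : _))
    exact hF.congr (Filter.Eventually.of_forall fun v => ((eq1 v).symm : _))

/-- Absolute convergence of the spherical long-element Jacquet–Whittaker integral:
the integrand is Lebesgue integrable on ℝ³ when `Re μ₁ > Re μ₂ > Re μ₃`. -/
theorem stmt_13 (μ₁ μ₂ μ₃ : ℂ) (h12 : μ₂.re < μ₁.re) (h23 : μ₃.re < μ₂.re) :
    Integrable (fun u : ℝ × ℝ × ℝ =>
      ((1 + u.2.1 ^ 2 + u.2.2 ^ 2 : ℝ) : ℂ) ^ ((-1 + μ₃ - μ₂) / 2) *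
        ((1 + u.1 ^ 2 + (u.2.2 - u.1 * u.2.1) ^ 2 : ℝ) : ℂ) ^ ((-1 + μ₂ - μ₁) / 2)) := by
  set a : ℝ := ((-1 + μ₃ - μ₂) / 2 : ℂ).re with ha_def
  set b : ℝ := ((-1 + μ₂ - μ₁) / 2 : ℂ).re with hb_def
  have ha : a < -(1/2) := by
    have : a = (-1 + μ₃.re - μ₂.re)/2 := by
      rw [ha_def]; simp [Complex.div_re, Complex.normSq]
    rw [this]; linarith
  have hb : b < -(1/2) := by
    have : b = (-1 + μ₂.re - μ₁.re)/2 := by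
      rw [hb_def]; simp [Complex.div_re, Complex.normSq]
    rw [this]; linarith
  have hfmeas : AEStronglyMeasurable (fun u : ℝ × ℝ × ℝ =>
      ((1 + u.2.1 ^ 2 + u.2.2 ^ 2 : ℝ) : ℂ) ^ ((-1 + μ₃ - μ₂) / 2) *
        ((1 + u.1 ^ 2 + (u.2.2 - u.1 * u.2.1) ^ 2 : ℝ) : ℂ) ^ ((-1 + μ₂ - μ₁) / 2))
      volume := by
    refine Continuous.aestronglyMeasurable (Continuous.mul ?_ ?_)
    · refine Continuous.cpow (Complex.continuous_ofReal.comp (by fun_prop))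
        continuous_const fun u => ?_
      exact Complex.ofReal_mem_slitPlane.2 (by positivity)
    · refine Continuous.cpow (Complex.continuous_ofReal.comp (by fun_prop))
        continuous_const fun u => ?_
      exact Complex.ofReal_mem_slitPlane.2 (by positivity)
  refine Integrable.mono' ((H1_int ha hb).add (H2_int ha hb)) hfmeas
    (Filter.Eventually.of_forall fun u => ?_)
  obtain ⟨x, y, z⟩ := u
  have hA : (0:ℝ) < 1 + y ^ 2 + z ^ 2 := by positivity
  have hB : (0:ℝ) < 1 + x ^ 2 + (z - x * y) ^ 2 := by positivity
  have hnorm : ‖((1 + y ^ 2 + z ^ 2 : ℝ) : ℂ) ^ ((-1 + μ₃ - μ₂) / 2) *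
      ((1 + x ^ 2 + (z - x * y) ^ 2 : ℝ) : ℂ) ^ ((-1 + μ₂ - μ₁) / 2)‖
      = (1 + y ^ 2 + z ^ 2) ^ a * (1 + x ^ 2 + (z - x * y) ^ 2) ^ b := by
    rw [norm_mul,
      Complex.norm_cpow_eq_rpow_re_of_pos hA, Complex.norm_cpow_eq_rpow_re_of_pos hB]
  rw [hnorm]
  have hH1 : (0:ℝ) ≤ (1 + y ^ 2 + z ^ 2) ^ a * (1 + (1 + y ^ 2 / 4) * x ^ 2) ^ b := by
    positivity
  have hH2 : (0:ℝ) ≤ (1 + (1 + x ^ 2 / 4) * y ^ 2) ^ a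
      * (1 + x ^ 2 + (z - x * y) ^ 2) ^ b := by positivity
  rcases le_or_gt ((x * y) ^ 2 / 4) (z ^ 2) with h | h
  · -- z² large: bound by H₂
    have hbase : 1 + (1 + x ^ 2 / 4) * y ^ 2 ≤ 1 + y ^ 2 + z ^ 2 := by nlinarith
    have : (1 + y ^ 2 + z ^ 2) ^ a ≤ (1 + (1 + x ^ 2 / 4) * y ^ 2) ^ a :=
      Real.rpow_le_rpow_of_nonpos (by positivity) hbase (by linarith)
    calc (1 + y ^ 2 + z ^ 2) ^ a * (1 + x ^ 2 + (z - x * y) ^ 2) ^ b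
        ≤ (1 + (1 + x ^ 2 / 4) * y ^ 2) ^ a * (1 + x ^ 2 + (z - x * y) ^ 2) ^ b :=
          mul_le_mul_of_nonneg_right this (Real.rpow_nonneg hB.le _)
      _ ≤ _ := le_add_of_nonneg_left hH1
  · -- (z - xy)² large: bound by H₁
    have hzc : (x * y) ^ 2 / 4 ≤ (z - x * y) ^ 2 := by nlinarith [sq_nonneg (z + (z - x * y))]
    have hbase : 1 + (1 + y ^ 2 / 4) * x ^ 2 ≤ 1 + x ^ 2 + (z - x * y) ^ 2 := by nlinarith
    have : (1 + x ^ 2 + (z - x * y) ^ 2) ^ b ≤ (1 + (1 + y ^ 2 / 4) * x ^ 2) ^ b :=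
      Real.rpow_le_rpow_of_nonpos (by positivity) hbase (by linarith)
    calc (1 + y ^ 2 + z ^ 2) ^ a * (1 + x ^ 2 + (z - x * y) ^ 2) ^ b
        ≤ (1 + y ^ 2 + z ^ 2) ^ a * (1 + (1 + y ^ 2 / 4) * x ^ 2) ^ b :=
          mul_le_mul_of_nonneg_left this (Real.rpow_nonneg hA.le _)
      _ ≤ _ := le_add_of_nonneg_right hH2
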